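/- The linear map A_d (defined on the space of polynomials of degree at most d) is injective for every positive integer d. -/
import Mathlib


open Polynomial

noncomputable def P : ℕ → Polynomial ℝ
  | 0 => 1
  | 1 => 1 + Polynomial.X
  | n + 2 => P (n + 1) + Polynomial.X * P n

/-- `Amon d k` is the value of the linear map `A_d` on the monomial `x^k`. -/
noncomputable def Amon : ℕ → ℕ → Polynomial ℝ
  | 0, 0 => 1 + 2 * Polynomial.X
  | 0, _ + 1 => 0
  | d + 1, k + 1 => Polynomial.X * Amon d k
  | d + 1, 0 =>
      P (2 * d + 3) -
        ∑ k ∈ Finset.range (d + 1),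
          Polynomial.C ((P (2 * d + 1)).coeff (k + 1)) * (Polynomial.X * Amon d k)

/-- The linear map `A_d` applied to a polynomial of degree at most `d`. -/
noncomputable def Aap (d : ℕ) (p : Polynomial ℝ) : Polynomial ℝ :=
  ∑ k ∈ Finset.range (d + 1), Polynomial.C (p.coeff k) * Amon d k

lemma Amon_trailing : ∀ d k j : ℕ, j < k → (Amon d k).coeff j = 0 := by
  intro d
  induction d with
  | zero =>
    intro k j h
    match k with
    | k + 1 => simp [Amon]
  | succ d ih =>
    intro k j h
    match k with
    | k + 1 =>
      rw [Amon]
      match j with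
      | 0 => simp [Polynomial.mul_coeff_zero]
      | j + 1 =>
        rw [Polynomial.coeff_X_mul]
        exact ih k j (Nat.lt_of_succ_lt_succ h)

lemma P_coeff_zero : ∀ n, (P n).coeff 0 = 1
  | 0 => by simp [P]
  | 1 => by simp [P]
  | n + 2 => by
    rw [P, Polynomial.coeff_add, Polynomial.mul_coeff_zero]
    simp [P_coeff_zero (n + 1)]

lemma Amon_zero_coeff_zero : ∀ d, (Amon d 0).coeff 0 = 1 := by
  intro d
  match d with
  | 0 => simp [Amon]
  | d + 1 =>
    rw [Amon, Polynomial.coeff_sub, P_coeff_zero, Polynomial.finset_sum_coeff]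
    simp [Polynomial.coeff_C_mul, Polynomial.mul_coeff_zero]

lemma Amon_diag : ∀ d k : ℕ, k ≤ d → (Amon d k).coeff k = 1 := by
  intro d
  induction d with
  | zero =>
    intro k h
    interval_cases k
    simp [Amon]
  | succ d ih =>
    intro k h
    match k with
    | 0 => exact Amon_zero_coeff_zero (d + 1)
    | k + 1 =>
      rw [Amon, Polynomial.coeff_X_mul]
      exact ih k (Nat.lt_succ_iff.mp h)

theorem A_injective (d : ℕ) (hd : 1 ≤ d) :
    ∀ p q : Polynomial ℝ, p.natDegree ≤ d → q.natDegree ≤ d →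
      Aap d p = Aap d q → p = q := by
  intro p q hp hq heq
  set r := p - q with hr
  have hAr : Aap d r = 0 := by
    have : Aap d r = Aap d p - Aap d q := by
      simp [Aap, hr, Polynomial.coeff_sub, map_sub, sub_mul,
        Finset.sum_sub_distrib]
    rw [this, heq, sub_self]
  have hrdeg : r.natDegree ≤ d := le_trans (Polynomial.natDegree_sub_le p q) (by omega)
  have key : ∀ k, r.coeff k = 0 := by
    intro k
    induction k using Nat.strong_induction_on with
    | _ k ihk =>
      by_cases hk : k ≤ d
      · have h0 : (Aap d r).coeff k = 0 := by rw [hAr]; simp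
        rw [Aap, Polynomial.finset_sum_coeff] at h0
        have hsum : ∑ j ∈ Finset.range (d + 1),
            (Polynomial.C (r.coeff j) * Amon d j).coeff k = r.coeff k := by
          rw [Finset.sum_eq_single k]
          · rw [Polynomial.coeff_C_mul, Amon_diag d k hk, mul_one]
          · intro j hj hjk
            rw [Polynomial.coeff_C_mul]
            rcases lt_or_gt_of_ne hjk with h | h
            · rw [ihk j h, zero_mul]
            · rw [Amon_trailing d j k h, mul_zero]
          · intro hk'
            exact absurd (Finset.mem_range.mpr (Nat.lt_succ_of_le hk)) hk'
        rw [hsum] at h0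
        exact h0
      · exact Polynomial.coeff_eq_zero_of_natDegree_lt
          (lt_of_le_of_lt hrdeg (by omega))
  have : r = 0 := Polynomial.ext fun k => by rw [key k]; simp
  exact sub_eq_zero.mp this
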